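/- For positive integers p, q, k with 1 ≤ k ≤ (p-1)q, we have ⌊k/q⌋ = ⌊(pk + p - 1)/(pq + 1)⌋. -/
import Mathlib

theorem stmt_6 (p q k : ℕ) (hp : 1 ≤ p) (hq : 1 ≤ q) (hk : 1 ≤ k)
    (hle : k ≤ (p - 1) * q) :
    k / q = (p * k + p - 1) / (p * q + 1) := by
  have hp2 : 2 ≤ p := by
    rcases Nat.lt_or_ge p 2 with h | h
    · interval_cases p <;> simp_all <;> omega
    · exact h
  set m := k / q with hm
  have h3 : m * q ≤ k := Nat.div_mul_le_self k q
  have h2 : k < (m + 1) * q := by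
    have h := Nat.div_add_mod k q
    have h' : k % q < q := Nat.mod_lt k hq
    calc k = q * m + k % q := h.symm
      _ < q * m + q := by omega
      _ = (m + 1) * q := by ring
  have h1 : m ≤ p - 1 := by
    rw [hm]
    calc k / q ≤ ((p - 1) * q) / q := Nat.div_le_div_right hle
      _ = p - 1 := Nat.mul_div_cancel _ hq
  symm
  apply Nat.div_eq_of_lt_le
  · calc m * (p * q + 1) = p * (m * q) + m := by ring
      _ ≤ p * k + (p - 1) := by
          have := Nat.mul_le_mul_left p h3; omega
      _ = p * k + p - 1 := by omega
  · have h4 : p * k + p ≤ p * ((m + 1) * q) := by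
      calc p * k + p = p * (k + 1) := by ring
        _ ≤ p * ((m + 1) * q) := Nat.mul_le_mul_left p h2
    calc p * k + p - 1 < p * k + p := by omega
      _ ≤ p * ((m + 1) * q) := h4
      _ ≤ p * ((m + 1) * q) + (m + 1) := Nat.le_add_right _ _
      _ = (m + 1) * (p * q + 1) := by ring
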